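/- For every closed μL'f formula φ' and every product p, the singleton family {p} satisfies φ' with respect to the FTS F if and only if p satisfies fm(φ') with respect to F. -/
import Mathlib


namespace SPLmu

/-- A feature transition system: `theta s a t` is the feature expression
(identified with the set of products satisfying it) guarding the transition. -/
structure FTS (S A P : Type) where
  theta : S → A → S → Set P
  init : S

/-- A labeled transition system. -/
structure LTS (S A : Type) where
  trans : S → A → S → Prop
  init : S

/-- Projection of an FTS onto a product. -/
def FTS.proj {S A P : Type} (F : FTS S A P) (p : P) : LTS S A :=
  ⟨fun s a t => p ∈ F.theta s a t, F.init⟩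

/-- Knaster–Tarski least (pre)fixpoint. -/
def slfp {α : Type} (f : Set α → Set α) : Set α := ⋂₀ {V | f V ⊆ V}

/-- Knaster–Tarski greatest (post)fixpoint. -/
def sgfp {α : Type} (f : Set α → Set α) : Set α := ⋃₀ {V | V ⊆ f V}

/-- The modal mu-calculus μL. -/
inductive MuL (A X : Type) : Type where
  | bot | top
  | neg : MuL A X → MuL A X
  | or  : MuL A X → MuL A X → MuL A X
  | and : MuL A X → MuL A X → MuL A X
  | dia : A → MuL A X → MuL A X
  | box : A → MuL A X → MuL A X
  | var : X → MuL A X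
  | mu  : X → MuL A X → MuL A X
  | nu  : X → MuL A X → MuL A X

/-- The feature mu-calculus μLf (also used as the syntax of μL'f, whose
modality ⟪a|χ⟫ corresponds to `dia`; the translation `fm` is then the identity). -/
inductive MuLf (A X P : Type) : Type where
  | bot | top
  | neg : MuLf A X P → MuLf A X P
  | or  : MuLf A X P → MuLf A X P → MuLf A X P
  | and : MuLf A X P → MuLf A X P → MuLf A X P
  | dia : A → Set P → MuLf A X P → MuLf A X P
  | box : A → Set P → MuLf A X P → MuLf A X P
  | var : X → MuLf A X P
  | mu  : X → MuLf A X P → MuLf A X P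
  | nu  : X → MuLf A X P → MuLf A X P

variable {S A X P : Type}

/-- Standard μL semantics over an LTS. -/
def MuL.sem [DecidableEq X] (L : LTS S A) : MuL A X → (X → Set S) → Set S
  | .bot, _ => ∅
  | .top, _ => Set.univ
  | .neg φ, ε => (MuL.sem L φ ε)ᶜ
  | .or φ ψ, ε => MuL.sem L φ ε ∪ MuL.sem L ψ ε
  | .and φ ψ, ε => MuL.sem L φ ε ∩ MuL.sem L ψ ε
  | .dia a φ, ε => {s | ∃ t, L.trans s a t ∧ t ∈ MuL.sem L φ ε}
  | .box a φ, ε => {s | ∀ t, L.trans s a t → t ∈ MuL.sem L φ ε}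
  | .var x, ε => ε x
  | .mu x φ, ε => slfp (fun V => MuL.sem L φ (Function.update ε x V))
  | .nu x φ, ε => sgfp (fun V => MuL.sem L φ (Function.update ε x V))

/-- Product-based μLf semantics over an FTS (sets of state-product pairs). -/
def MuLf.sem [DecidableEq X] (F : FTS S A P) : MuLf A X P → (X → Set (S × P)) → Set (S × P)
  | .bot, _ => ∅
  | .top, _ => Set.univ
  | .neg φ, η => (MuLf.sem F φ η)ᶜ
  | .or φ ψ, η => MuLf.sem F φ η ∪ MuLf.sem F ψ η
  | .and φ ψ, η => MuLf.sem F φ η ∩ MuLf.sem F ψ η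
  | .dia a χ φ, η =>
      {sp | sp.2 ∈ χ ∧ ∃ t, sp.2 ∈ F.theta sp.1 a t ∧ (t, sp.2) ∈ MuLf.sem F φ η}
  | .box a χ φ, η =>
      {sp | sp.2 ∈ χ → ∀ t, sp.2 ∈ F.theta sp.1 a t → (t, sp.2) ∈ MuLf.sem F φ η}
  | .var x, η => η x
  | .mu x φ, η => slfp (fun V => MuLf.sem F φ (Function.update η x V))
  | .nu x φ, η => sgfp (fun V => MuLf.sem F φ (Function.update η x V))

/-- Family-based μL'f semantics over an FTS (sets of state-family pairs);
here `dia` plays the role of the family modality ⟪a|χ⟫. -/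
def MuLf.fsem [DecidableEq X] (F : FTS S A P) :
    MuLf A X P → (X → Set (S × Set P)) → Set (S × Set P)
  | .bot, _ => ∅
  | .top, _ => Set.univ
  | .neg φ, ζ => (MuLf.fsem F φ ζ)ᶜ
  | .or φ ψ, ζ => MuLf.fsem F φ ζ ∪ MuLf.fsem F ψ ζ
  | .and φ ψ, ζ => MuLf.fsem F φ ζ ∩ MuLf.fsem F ψ ζ
  | .dia a χ φ, ζ =>
      {sP | sP.2 ⊆ χ ∧ ∃ t, sP.2 ⊆ F.theta sP.1 a t ∧
        (t, sP.2 ∩ χ ∩ F.theta sP.1 a t) ∈ MuLf.fsem F φ ζ}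
  | .box a χ φ, ζ =>
      {sP | (sP.2 ∩ χ).Nonempty → ∀ t, (sP.2 ∩ χ ∩ F.theta sP.1 a t).Nonempty →
        (t, sP.2 ∩ χ ∩ F.theta sP.1 a t) ∈ MuLf.fsem F φ ζ}
  | .var x, ζ => ζ x
  | .mu x φ, ζ => slfp (fun W => MuLf.fsem F φ (Function.update ζ x W))
  | .nu x φ, ζ => sgfp (fun W => MuLf.fsem F φ (Function.update ζ x W))

-- The translation sm : μLf × 𝒫 → μL.
open Classical in
noncomputable def MuLf.sm : MuLf A X P → P → MuL A X
  | .bot, _ => .bot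
  | .top, _ => .top
  | .neg φ, p => .neg (MuLf.sm φ p)
  | .or φ ψ, p => .or (MuLf.sm φ p) (MuLf.sm ψ p)
  | .and φ ψ, p => .and (MuLf.sm φ p) (MuLf.sm ψ p)
  | .dia a χ φ, p => if p ∈ χ then .dia a (MuLf.sm φ p) else .bot
  | .box a χ φ, p => if p ∈ χ then .box a (MuLf.sm φ p) else .top
  | .var x, _ => .var x
  | .mu x φ, p => .mu x (MuLf.sm φ p)
  | .nu x φ, p => .nu x (MuLf.sm φ p)

/-- Free variables of a μLf formula. -/
def MuLf.fv : MuLf A X P → Set X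
  | .bot => ∅
  | .top => ∅
  | .neg φ => MuLf.fv φ
  | .or φ ψ => MuLf.fv φ ∪ MuLf.fv ψ
  | .and φ ψ => MuLf.fv φ ∪ MuLf.fv ψ
  | .dia _ _ φ => MuLf.fv φ
  | .box _ _ φ => MuLf.fv φ
  | .var x => {x}
  | .mu x φ => MuLf.fv φ \ {x}
  | .nu x φ => MuLf.fv φ \ {x}

/-- A μLf formula is closed if it has no free variables. -/
def MuLf.closed (φ : MuLf A X P) : Prop := MuLf.fv φ = ∅

/-- Negation-free μLf formulas. -/
def MuLf.negFree : MuLf A X P → Prop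
  | .bot => True
  | .top => True
  | .neg _ => False
  | .or φ ψ => MuLf.negFree φ ∧ MuLf.negFree ψ
  | .and φ ψ => MuLf.negFree φ ∧ MuLf.negFree ψ
  | .dia _ _ φ => MuLf.negFree φ
  | .box _ _ φ => MuLf.negFree φ
  | .var _ => True
  | .mu _ φ => MuLf.negFree φ
  | .nu _ φ => MuLf.negFree φ

/-- Diamond-free μLf formulas (no ⟨a|χ⟩ / ⟪a|χ⟫). -/
def MuLf.diaFree : MuLf A X P → Prop
  | .bot => True
  | .top => True
  | .neg φ => MuLf.diaFree φ
  | .or φ ψ => MuLf.diaFree φ ∧ MuLf.diaFree ψ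
  | .and φ ψ => MuLf.diaFree φ ∧ MuLf.diaFree ψ
  | .dia _ _ _ => False
  | .box _ _ φ => MuLf.diaFree φ
  | .var _ => True
  | .mu _ φ => MuLf.diaFree φ
  | .nu _ φ => MuLf.diaFree φ

mutual
/-- All free occurrences of `x` are under an even number of negations. -/
def MuLf.posIn (x : X) : MuLf A X P → Prop
  | .bot => True
  | .top => True
  | .neg φ => MuLf.negOcc x φ
  | .or φ ψ => MuLf.posIn x φ ∧ MuLf.posIn x ψ
  | .and φ ψ => MuLf.posIn x φ ∧ MuLf.posIn x ψ
  | .dia _ _ φ => MuLf.posIn x φ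
  | .box _ _ φ => MuLf.posIn x φ
  | .var _ => True
  | .mu y φ => y = x ∨ MuLf.posIn x φ
  | .nu y φ => y = x ∨ MuLf.posIn x φ

/-- All free occurrences of `x` are under an odd number of negations. -/
def MuLf.negOcc (x : X) : MuLf A X P → Prop
  | .bot => True
  | .top => True
  | .neg φ => MuLf.posIn x φ
  | .or φ ψ => MuLf.negOcc x φ ∧ MuLf.negOcc x ψ
  | .and φ ψ => MuLf.negOcc x φ ∧ MuLf.negOcc x ψ
  | .dia _ _ φ => MuLf.negOcc x φ
  | .box _ _ φ => MuLf.negOcc x φ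
  | .var y => y ≠ x
  | .mu y φ => y = x ∨ MuLf.negOcc x φ
  | .nu y φ => y = x ∨ MuLf.negOcc x φ
end

/-- Well-formedness: fixpoint-bound variables occur positively. -/
def MuLf.wf : MuLf A X P → Prop
  | .bot => True
  | .top => True
  | .neg φ => MuLf.wf φ
  | .or φ ψ => MuLf.wf φ ∧ MuLf.wf ψ
  | .and φ ψ => MuLf.wf φ ∧ MuLf.wf ψ
  | .dia _ _ φ => MuLf.wf φ
  | .box _ _ φ => MuLf.wf φ
  | .var _ => True
  | .mu x φ => MuLf.posIn x φ ∧ MuLf.wf φ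
  | .nu x φ => MuLf.posIn x φ ∧ MuLf.wf φ

/-- Substitution φ[¬X/X] of ¬X for the free occurrences of X. -/
def MuLf.substNegVar [DecidableEq X] (x : X) : MuLf A X P → MuLf A X P
  | .bot => .bot
  | .top => .top
  | .neg φ => .neg (MuLf.substNegVar x φ)
  | .or φ ψ => .or (MuLf.substNegVar x φ) (MuLf.substNegVar x ψ)
  | .and φ ψ => .and (MuLf.substNegVar x φ) (MuLf.substNegVar x ψ)
  | .dia a χ φ => .dia a χ (MuLf.substNegVar x φ)
  | .box a χ φ => .box a χ (MuLf.substNegVar x φ)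
  | .var y => if y = x then .neg (.var y) else .var y
  | .mu y φ => if y = x then .mu y φ else .mu y (MuLf.substNegVar x φ)
  | .nu y φ => if y = x then .nu y φ else .nu y (MuLf.substNegVar x φ)

/-- Projection from state-family sets to state-product sets. -/
def fp {S P : Type} (W : Set (S × Set P)) : Set (S × P) :=
  {sp | ∃ Pf : Set P, (sp.1, Pf) ∈ W ∧ sp.2 ∈ Pf}


/-- Projected semantics: semantics of a μLf formula for a fixed product `p`,
as sets of states. -/
def psem [DecidableEq X] (F : FTS S A P) (p : P) : MuLf A X P → (X → Set S) → Set S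
  | .bot, _ => ∅
  | .top, _ => Set.univ
  | .neg φ, ε => (psem F p φ ε)ᶜ
  | .or φ ψ, ε => psem F p φ ε ∪ psem F p ψ ε
  | .and φ ψ, ε => psem F p φ ε ∩ psem F p ψ ε
  | .dia a χ φ, ε => {s | p ∈ χ ∧ ∃ t, p ∈ F.theta s a t ∧ t ∈ psem F p φ ε}
  | .box a χ φ, ε => {s | p ∈ χ → ∀ t, p ∈ F.theta s a t → t ∈ psem F p φ ε}
  | .var x, ε => ε x
  | .mu x φ, ε => slfp (fun U => psem F p φ (Function.update ε x U))
  | .nu x φ, ε => sgfp (fun U => psem F p φ (Function.update ε x U))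

lemma preimage_slfp {α β : Type} (e : α → β) (he : Function.Injective e)
    (f : Set β → Set β) (g : Set α → Set α)
    (h : ∀ V, e ⁻¹' (f V) = g (e ⁻¹' V)) :
    e ⁻¹' (slfp f) = slfp g := by
  ext s
  simp only [Set.mem_preimage, slfp, Set.mem_sInter, Set.mem_setOf_eq]
  constructor
  · intro hs U hU
    set V : Set β := {b | ∀ s', e s' = b → s' ∈ U} with hVdef
    have hpre : e ⁻¹' V = U := by
      ext t
      simp only [Set.mem_preimage, hVdef, Set.mem_setOf_eq]
      exact ⟨fun h' => h' t rfl, fun ht t' het => (he het) ▸ ht⟩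
    have hV : f V ⊆ V := by
      intro b hb s' hes'
      have : s' ∈ e ⁻¹' (f V) := by rw [Set.mem_preimage, hes']; exact hb
      rw [h, hpre] at this
      exact hU this
    have := hs V hV
    exact this s rfl
  · intro hs V hV
    have : g (e ⁻¹' V) ⊆ e ⁻¹' V := by
      rw [← h]; exact fun b hb => hV hb
    exact hs _ this

lemma preimage_sgfp {α β : Type} (e : α → β) (he : Function.Injective e)
    (f : Set β → Set β) (g : Set α → Set α)
    (h : ∀ V, e ⁻¹' (f V) = g (e ⁻¹' V)) :
    e ⁻¹' (sgfp f) = sgfp g := by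
  ext s
  simp only [Set.mem_preimage, sgfp, Set.mem_sUnion, Set.mem_setOf_eq]
  constructor
  · rintro ⟨V, hV, hsV⟩
    refine ⟨e ⁻¹' V, ?_, hsV⟩
    rw [← h]; exact fun b hb => hV hb
  · rintro ⟨U, hU, hsU⟩
    refine ⟨e '' U, ?_, ⟨s, hsU, rfl⟩⟩
    have hpre : e ⁻¹' (e '' U) = U := Function.Injective.preimage_image he U
    rintro b ⟨t, ht, rfl⟩
    have : t ∈ e ⁻¹' (f (e '' U)) := by
      rw [h, hpre]; exact hU ht
    exact this

lemma update_slice {α β : Type} [DecidableEq X] (e : α → β)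
    (η : X → Set β) (x : X) (V : Set β) :
    (fun y => e ⁻¹' (Function.update η x V y)) =
      Function.update (fun y => e ⁻¹' (η y)) x (e ⁻¹' V) := by
  funext y
  by_cases hy : y = x
  · subst hy; simp
  · simp [Function.update_of_ne hy]

lemma sem_psem [DecidableEq X] (F : FTS S A P) (p : P) (φ : MuLf A X P) :
    ∀ η : X → Set (S × P), ∀ s : S,
      ((s, p) ∈ MuLf.sem F φ η ↔ s ∈ psem F p φ (fun x => {t | (t, p) ∈ η x})) := by
  have hinj : Function.Injective (fun t : S => (t, p)) := by
    intro a b h; simpa using congrArg Prod.fst h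
  induction φ with
  | bot => intro η s; simp [MuLf.sem, psem]
  | top => intro η s; simp [MuLf.sem, psem]
  | neg φ ih => intro η s; simp [MuLf.sem, psem, ih η s]
  | or φ ψ ih1 ih2 => intro η s; simp [MuLf.sem, psem, ih1 η s, ih2 η s]
  | and φ ψ ih1 ih2 => intro η s; simp [MuLf.sem, psem, ih1 η s, ih2 η s]
  | dia a χ φ ih =>
    intro η s
    simp only [MuLf.sem, psem, Set.mem_setOf_eq]
    constructor
    · rintro ⟨hχ, t, ht, hmem⟩; exact ⟨hχ, t, ht, (ih η t).mp hmem⟩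
    · rintro ⟨hχ, t, ht, hmem⟩; exact ⟨hχ, t, ht, (ih η t).mpr hmem⟩
  | box a χ φ ih =>
    intro η s
    simp only [MuLf.sem, psem, Set.mem_setOf_eq]
    constructor
    · intro h hχ t ht; exact (ih η t).mp (h hχ t ht)
    · intro h hχ t ht; exact (ih η t).mpr (h hχ t ht)
  | var x => intro η s; simp [MuLf.sem, psem, Set.mem_setOf_eq]
  | mu x φ ih =>
    intro η s
    have key : (fun t : S => (t, p)) ⁻¹'
        (slfp (fun V => MuLf.sem F φ (Function.update η x V))) =
        slfp (fun U => psem F p φ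
          (Function.update (fun y => {t | (t, p) ∈ η y}) x U)) := by
      apply preimage_slfp _ hinj
      intro V
      ext t
      rw [Set.mem_preimage]
      rw [ih (Function.update η x V) t]
      have henv : (fun y => {t | (t, p) ∈ Function.update η x V y}) =
          Function.update (fun y => {t | (t, p) ∈ η y}) x
            ((fun t : S => (t, p)) ⁻¹' V) := by
        funext y
        by_cases hy : y = x
        · subst hy; simp only [Function.update_self]; rfl
        · simp only [Function.update_of_ne hy]
      rw [henv]
    exact Set.ext_iff.mp key s
  | nu x φ ih =>
    intro η s
    have key : (fun t : S => (t, p)) ⁻¹'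
        (sgfp (fun V => MuLf.sem F φ (Function.update η x V))) =
        sgfp (fun U => psem F p φ
          (Function.update (fun y => {t | (t, p) ∈ η y}) x U)) := by
      apply preimage_sgfp _ hinj
      intro V
      ext t
      rw [Set.mem_preimage]
      rw [ih (Function.update η x V) t]
      have henv : (fun y => {t | (t, p) ∈ Function.update η x V y}) =
          Function.update (fun y => {t | (t, p) ∈ η y}) x
            ((fun t : S => (t, p)) ⁻¹' V) := by
        funext y
        by_cases hy : y = x
        · subst hy; simp only [Function.update_self]; rfl
        · simp only [Function.update_of_ne hy]
      rw [henv]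
    exact Set.ext_iff.mp key s

lemma fsem_psem [DecidableEq X] (F : FTS S A P) (p : P) (φ : MuLf A X P) :
    ∀ ζ : X → Set (S × Set P), ∀ s : S,
      ((s, ({p} : Set P)) ∈ MuLf.fsem F φ ζ ↔
        s ∈ psem F p φ (fun x => {t | (t, ({p} : Set P)) ∈ ζ x})) := by
  have hinj : Function.Injective (fun t : S => (t, ({p} : Set P))) := by
    intro a b h; simpa using congrArg Prod.fst h
  induction φ with
  | bot => intro ζ s; simp [MuLf.fsem, psem]
  | top => intro ζ s; simp [MuLf.fsem, psem]
  | neg φ ih => intro ζ s; simp [MuLf.fsem, psem, ih ζ s]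
  | or φ ψ ih1 ih2 => intro ζ s; simp [MuLf.fsem, psem, ih1 ζ s, ih2 ζ s]
  | and φ ψ ih1 ih2 => intro ζ s; simp [MuLf.fsem, psem, ih1 ζ s, ih2 ζ s]
  | dia a χ φ ih =>
    intro ζ s
    simp only [MuLf.fsem, psem, Set.mem_setOf_eq]
    constructor
    · rintro ⟨hχ, t, ht, hmem⟩
      have hpχ : p ∈ χ := hχ rfl
      have hpt : p ∈ F.theta s a t := ht rfl
      have heq : ({p} : Set P) ∩ χ ∩ F.theta s a t = {p} := by
        ext q
        simp only [Set.mem_inter_iff, Set.mem_singleton_iff]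
        constructor
        · rintro ⟨⟨hq, _⟩, _⟩; exact hq
        · rintro rfl; exact ⟨⟨rfl, hpχ⟩, hpt⟩
      rw [heq] at hmem
      exact ⟨hpχ, t, hpt, (ih ζ t).mp hmem⟩
    · rintro ⟨hpχ, t, hpt, hmem⟩
      have heq : ({p} : Set P) ∩ χ ∩ F.theta s a t = {p} := by
        ext q
        simp only [Set.mem_inter_iff, Set.mem_singleton_iff]
        constructor
        · rintro ⟨⟨hq, _⟩, _⟩; exact hq
        · rintro rfl; exact ⟨⟨rfl, hpχ⟩, hpt⟩
      refine ⟨by simpa using hpχ, t, by simpa using hpt, ?_⟩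
      rw [heq]
      exact (ih ζ t).mpr hmem
  | box a χ φ ih =>
    intro ζ s
    simp only [MuLf.fsem, psem, Set.mem_setOf_eq]
    constructor
    · intro h hpχ t hpt
      have heq : ({p} : Set P) ∩ χ ∩ F.theta s a t = {p} := by
        ext q
        simp only [Set.mem_inter_iff, Set.mem_singleton_iff]
        constructor
        · rintro ⟨⟨hq, _⟩, _⟩; exact hq
        · rintro rfl; exact ⟨⟨rfl, hpχ⟩, hpt⟩
      have h1 : (({p} : Set P) ∩ χ).Nonempty := ⟨p, rfl, hpχ⟩
      have h2 : (({p} : Set P) ∩ χ ∩ F.theta s a t).Nonempty := by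
        rw [heq]; exact ⟨p, rfl⟩
      have := h h1 t h2
      rw [heq] at this
      exact (ih ζ t).mp this
    · intro h hne t htne
      obtain ⟨q, hq1, hq2'⟩ := hne
      have hq2 : p ∈ χ := by rwa [Set.mem_singleton_iff.mp hq1] at hq2'
      obtain ⟨r, ⟨hr1, _⟩, hr3'⟩ := htne
      have hr3 : p ∈ F.theta s a t := by rwa [Set.mem_singleton_iff.mp hr1] at hr3'
      have heq : ({p} : Set P) ∩ χ ∩ F.theta s a t = {p} := by
        ext q'
        simp only [Set.mem_inter_iff, Set.mem_singleton_iff]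
        constructor
        · rintro ⟨⟨hq', _⟩, _⟩; exact hq'
        · rintro rfl; exact ⟨⟨rfl, hq2⟩, hr3⟩
      rw [heq]
      exact (ih ζ t).mpr (h hq2 t hr3)
  | var x => intro ζ s; simp [MuLf.fsem, psem, Set.mem_setOf_eq]
  | mu x φ ih =>
    intro ζ s
    have key : (fun t : S => (t, ({p} : Set P))) ⁻¹'
        (slfp (fun W => MuLf.fsem F φ (Function.update ζ x W))) =
        slfp (fun U => psem F p φ
          (Function.update (fun y => {t | (t, ({p} : Set P)) ∈ ζ y}) x U)) := by
      apply preimage_slfp _ hinj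
      intro V
      ext t
      rw [Set.mem_preimage]
      rw [ih (Function.update ζ x V) t]
      have henv : (fun y => {t | (t, ({p} : Set P)) ∈ Function.update ζ x V y}) =
          Function.update (fun y => {t | (t, ({p} : Set P)) ∈ ζ y}) x
            ((fun t : S => (t, ({p} : Set P))) ⁻¹' V) := by
        funext y
        by_cases hy : y = x
        · subst hy; simp only [Function.update_self]; rfl
        · simp only [Function.update_of_ne hy]
      rw [henv]
    exact Set.ext_iff.mp key s
  | nu x φ ih =>
    intro ζ s
    have key : (fun t : S => (t, ({p} : Set P))) ⁻¹'
        (sgfp (fun W => MuLf.fsem F φ (Function.update ζ x W))) =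
        sgfp (fun U => psem F p φ
          (Function.update (fun y => {t | (t, ({p} : Set P)) ∈ ζ y}) x U)) := by
      apply preimage_sgfp _ hinj
      intro V
      ext t
      rw [Set.mem_preimage]
      rw [ih (Function.update ζ x V) t]
      have henv : (fun y => {t | (t, ({p} : Set P)) ∈ Function.update ζ x V y}) =
          Function.update (fun y => {t | (t, ({p} : Set P)) ∈ ζ y}) x
            ((fun t : S => (t, ({p} : Set P))) ⁻¹' V) := by
        funext y
        by_cases hy : y = x
        · subst hy; simp only [Function.update_self]; rfl
        · simp only [Function.update_of_ne hy]
      rw [henv]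
    exact Set.ext_iff.mp key s

/-- {p} ⊨'_F φ' iff p ⊨_F fm(φ') for closed φ' (fm is the identity
on our shared syntax, replacing ⟪a|χ⟫ by ⟨a|χ⟩). -/
theorem stmt5 {S A X P : Type} [DecidableEq X] (F : FTS S A P)
    (phi : MuLf A X P) (hclosed : MuLf.closed phi) (p : P) :
    (F.init, ({p} : Set P)) ∈ MuLf.fsem F phi (fun _ => (∅ : Set (S × Set P))) ↔
      (F.init, p) ∈ MuLf.sem F phi (fun _ => (∅ : Set (S × P))) := by
  have h1 := fsem_psem F p phi (fun _ => (∅ : Set (S × Set P))) F.init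
  have h2 := sem_psem F p phi (fun _ => (∅ : Set (S × P))) F.init
  simp only [Set.mem_empty_iff_false, Set.setOf_false] at h1 h2
  rw [h1, h2]

end SPLmu
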